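/- arXiv:2103.08939 — 2 statements merged into one kernel-verified Lean document; each statement's English description precedes it below -/
import Mathlib

section
/- The twisted antipode S_F(x) := u·S(x)·u⁻¹, where u := Σ fᵏ·S(fₖ) with inverse u⁻¹ = Σ S(f̄ᵏ)·f̄ₖ, satisfies the antipode axioms for the twisted bialgebra (H, ·, Δ_F, ε): writing Δ_F(x) = Σ x_{F(1)} ⊗ x_{F(2)}, one has Σ S_F(x_{F(1)})·x_{F(2)} = ε(x)·1 and Σ x_{F(1)}·S_F(x_{F(2)}) = ε(x)·1 for all x ∈ H. -/
open TensorProduct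

noncomputable section

/-- The generic "twisted bilinear map": given `H`-actions on `A` and `B`, a bilinear map
`mu : A →ₗ B →ₗ C` and an element `T = Σ T₁ ⊗ T₂` of `H ⊗ H`, this is the bilinear map
`(a, b) ↦ Σ mu (T₁ • a) (T₂ • b)`. -/
def twistBil {k H A B C : Type*} [CommRing k] [Ring H] [Algebra k H]
    [AddCommGroup A] [Module k A] [AddCommGroup B] [Module k B]
    [AddCommGroup C] [Module k C]
    (actA : H →ₗ[k] A →ₗ[k] A) (actB : H →ₗ[k] B →ₗ[k] B)
    (mu : A →ₗ[k] B →ₗ[k] C) (T : H ⊗[k] H) : A →ₗ[k] B →ₗ[k] C :=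
  TensorProduct.curry (TensorProduct.lift mu ∘ₗ
    (TensorProduct.homTensorHomMap (σ₁₂ := RingHom.id k) (M := A) (N := B) (M₂ := A)
      (N₂ := B) ∘ₗ TensorProduct.map actA actB) T)

/-- A Drinfel'd twist on a Hopf algebra `H`: an invertible element `F` of `H ⊗ H`
(with specified inverse `Finv`) satisfying the 2-cocycle condition
`(F ⊗ 1)·((Δ ⊗ id)(F)) = (1 ⊗ F)·((id ⊗ Δ)(F))` and the normalization condition
`(ε ⊗ id)(F) = 1 = (id ⊗ ε)(F)`. -/
def IsDrinfeldTwist {k H : Type*} [CommRing k] [Ring H] [HopfAlgebra k H]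
    (F Finv : H ⊗[k] H) : Prop :=
  F * Finv = 1 ∧ Finv * F = 1 ∧
  TensorProduct.map LinearMap.id ((TensorProduct.mk k H H).flip 1) F *
      TensorProduct.assoc k H H H ((Coalgebra.comul (R := k) (A := H)).rTensor H F) =
    ((1 : H) ⊗ₜ[k] F) * (Coalgebra.comul (R := k) (A := H)).lTensor H F ∧
  TensorProduct.lid k H ((Coalgebra.counit (R := k) (A := H)).rTensor H F) = 1 ∧
  TensorProduct.rid k H ((Coalgebra.counit (R := k) (A := H)).lTensor H F) = 1

/-- The twisted comultiplication `Δ_F(x) := F · Δ(x) · F⁻¹`, as a `k`-linear map. -/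
def comulF {k H : Type*} [CommRing k] [Ring H] [HopfAlgebra k H]
    (F Finv : H ⊗[k] H) : H →ₗ[k] H ⊗[k] H :=
  LinearMap.mulRight k Finv ∘ₗ LinearMap.mulLeft k F ∘ₗ Coalgebra.comul (R := k)

/-- The `R`-matrix `R := τ(F) · F⁻¹` of a Drinfel'd twist. -/
def Rmat {k H : Type*} [CommRing k] [Ring H] [Algebra k H]
    (F Finv : H ⊗[k] H) : H ⊗[k] H :=
  TensorProduct.comm k H H F * Finv

/-- The inverse `R⁻¹ = F · τ(F⁻¹)` of the `R`-matrix of a Drinfel'd twist; written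
`R⁻¹ = Σ Rₖ ⊗ Rᵏ`. -/
def RmatInv {k H : Type*} [CommRing k] [Ring H] [Algebra k H]
    (F Finv : H ⊗[k] H) : H ⊗[k] H :=
  F * TensorProduct.comm k H H Finv

/-- `H` is cocommutative if `τ ∘ Δ = Δ`. -/
def IsCocommutative (k H : Type*) [CommRing k] [Ring H] [HopfAlgebra k H] : Prop :=
  ∀ x : H, TensorProduct.comm k H H (Coalgebra.comul (R := k) x) = Coalgebra.comul (R := k) x

/-- For `T = Σ T₁ ⊗ T₂ ∈ H ⊗ H`, the element `T₁₂ = Σ T₁ ⊗ T₂ ⊗ 1` of `H ⊗ H ⊗ H`. -/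
def leg12 {k H : Type*} [CommRing k] [Ring H] [Algebra k H]
    (T : H ⊗[k] H) : H ⊗[k] (H ⊗[k] H) :=
  TensorProduct.map LinearMap.id ((TensorProduct.mk k H H).flip 1) T

/-- For `T = Σ T₁ ⊗ T₂ ∈ H ⊗ H`, the element `T₁₃ = Σ T₁ ⊗ 1 ⊗ T₂` of `H ⊗ H ⊗ H`. -/
def leg13 {k H : Type*} [CommRing k] [Ring H] [Algebra k H]
    (T : H ⊗[k] H) : H ⊗[k] (H ⊗[k] H) :=
  TensorProduct.map LinearMap.id (TensorProduct.mk k H H 1) T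

/-- For `T ∈ H ⊗ H`, the element `T₂₃ = 1 ⊗ T` of `H ⊗ H ⊗ H`. -/
def leg23 {k H : Type*} [CommRing k] [Ring H] [Algebra k H]
    (T : H ⊗[k] H) : H ⊗[k] (H ⊗[k] H) :=
  (1 : H) ⊗ₜ[k] T

/-- A (k-bilinear) left `H`-action: `(gh) • a = g • (h • a)` and `1 • a = a`. -/
def IsHAction {k H A : Type*} [CommRing k] [Ring H] [Algebra k H]
    [AddCommGroup A] [Module k A] (act : H →ₗ[k] A →ₗ[k] A) : Prop :=
  (∀ (g h : H) (a : A), act (g * h) a = act g (act h a)) ∧ ∀ a : A, act 1 a = a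

/-- An `H`-module algebra structure on `A`: a left `H`-action such that
`h • (a·b) = Σ (h⁽¹⁾ • a)·(h⁽²⁾ • b)` and `h • 1 = ε(h)·1`. -/
def IsModuleAlgebra {k H A : Type*} [CommRing k] [Ring H] [HopfAlgebra k H]
    [Ring A] [Algebra k A] (act : H →ₗ[k] A →ₗ[k] A) : Prop :=
  IsHAction act ∧
  (∀ (h : H) (a b : A),
    act h (a * b) = twistBil act act (LinearMap.mul k A) (Coalgebra.comul (R := k) h) a b) ∧
  ∀ h : H, act h 1 = Coalgebra.counit (R := k) h • (1 : A)

/-- The star product `a ⋆ b := Σ (f̄ᵏ • a)·(f̄ₖ • b)` on an `H`-module algebra,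
as a bilinear map; here `Finv = Σ f̄ᵏ ⊗ f̄ₖ` is the inverse of the twist. -/
def starBil {k H A : Type*} [CommRing k] [Ring H] [Algebra k H]
    [Ring A] [Algebra k A] (act : H →ₗ[k] A →ₗ[k] A) (Finv : H ⊗[k] H) :
    A →ₗ[k] A →ₗ[k] A :=
  twistBil act act (LinearMap.mul k A) Finv

/-- The Lie bracket of a Lie algebra `g` over `k`, as a bilinear map. -/
def lieBil (k g : Type*) [CommRing k] [LieRing g] [LieAlgebra k g] : g →ₗ[k] g →ₗ[k] g :=
  LinearMap.mk₂ k (fun x y => ⁅x, y⁆) add_lie smul_lie lie_add lie_smul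

/-- An `H`-equivariant Lie algebra structure: a left `H`-action on the Lie algebra `g`
such that `h • ⁅a, b⁆ = Σ ⁅h⁽¹⁾ • a, h⁽²⁾ • b⁆`. -/
def IsEquivLieAlgebra {k H g : Type*} [CommRing k] [Ring H] [HopfAlgebra k H]
    [LieRing g] [LieAlgebra k g] (act : H →ₗ[k] g →ₗ[k] g) : Prop :=
  IsHAction act ∧
  ∀ (h : H) (a b : g),
    act h ⁅a, b⁆ = twistBil act act (lieBil k g) (Coalgebra.comul (R := k) h) a b

/-- The twisted bracket `[a, b]⋆ := Σ ⁅f̄ᵏ • a, f̄ₖ • b⁆` on an `H`-equivariant Lie algebra. -/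
def lieStar {k H g : Type*} [CommRing k] [Ring H] [Algebra k H]
    [LieRing g] [LieAlgebra k g] (act : H →ₗ[k] g →ₗ[k] g) (Finv : H ⊗[k] H) :
    g →ₗ[k] g →ₗ[k] g :=
  twistBil act act (lieBil k g) Finv

/-- The twisted antipode `S_F(x) := u · S(x) · u⁻¹` with `u := Σ fᵏ·S(fₖ)` and
`u⁻¹ = Σ S(f̄ᵏ)·f̄ₖ`. -/
def antipodeF {k H : Type*} [CommRing k] [Ring H] [HopfAlgebra k H]
    (F Finv : H ⊗[k] H) : H →ₗ[k] H :=
  LinearMap.mulRight k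
      (LinearMap.mul' k H ((HopfAlgebra.antipode (R := k)).rTensor H Finv)) ∘ₗ
    LinearMap.mulLeft k
      (LinearMap.mul' k H ((HopfAlgebra.antipode (R := k)).lTensor H F)) ∘ₗ
    HopfAlgebra.antipode (R := k)

end


/-! ## Auxiliary machinery for the proof -/

noncomputable section TwistAux
variable {k H : Type*} [CommRing k] [Ring H] [HopfAlgebra k H]
open Coalgebra HopfAlgebra
local notation "ε" => Coalgebra.counit (R := k) (A := H)
local notation "𝒮" => HopfAlgebra.antipode (R := k) (A := H)






lemma antipode_one' : 𝒮 (1 : H) = 1 := by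
  have h := HopfAlgebra.mul_antipode_rTensor_comul_apply (R := k) (A := H) 1
  rw [Bialgebra.comul_one, Algebra.TensorProduct.one_def] at h
  simpa using h

lemma repr_counit_smul_right {a : H} {ι : Type*} (r : Repr k a ι) :
    ∑ i ∈ r.index, ε (r.right i) • r.left i = a := by
  have h := Coalgebra.sum_tmul_counit_eq (R := k) r
  apply_fun (TensorProduct.rid k H) at h
  simpa [map_sum, -Coalgebra.sum_tmul_counit_eq] using h

lemma repr_counit_smul_left {a : H} {ι : Type*} (r : Repr k a ι) :
    ∑ i ∈ r.index, ε (r.left i) • r.right i = a := by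
  have h := Coalgebra.sum_counit_tmul_eq (R := k) r
  apply_fun (TensorProduct.lid k H) at h
  simpa [map_sum, -Coalgebra.sum_counit_tmul_eq] using h

/-- A representation of `comul (a*b)` built from representations of `comul a`, `comul b`. -/
def mulRepr {a b : H} {ι κ : Type*} (ra : Repr k a ι) (rb : Repr k b κ) : Repr k (a * b) (ι × κ) where
  index := ra.index ×ˢ rb.index
  left := fun p => ra.left p.1 * rb.left p.2
  right := fun p => ra.right p.1 * rb.right p.2
  eq := by
    rw [Bialgebra.comul_mul, ← ra.eq, ← rb.eq, Finset.sum_mul_sum, Finset.sum_product]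
    simp [Algebra.TensorProduct.tmul_mul_tmul]

lemma helper1 {c : H} {ι : Type*} (r : Repr k c ι) (A B : H) :
    ∑ m ∈ r.index, A * (𝒮 (r.left m) * (r.right m * B)) = ε c • (A * B) := by
  rw [← Finset.mul_sum]
  have h : ∑ m ∈ r.index, 𝒮 (r.left m) * (r.right m * B)
      = (∑ m ∈ r.index, 𝒮 (r.left m) * r.right m) * B := by
    rw [Finset.sum_mul]
    exact Finset.sum_congr rfl fun m _ => (mul_assoc _ _ _).symm
  rw [h, sum_antipode_mul_eq_smul r, smul_mul_assoc, one_mul, mul_smul_comm]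

lemma helper5 {c : H} {ι : Type*} (r : Repr k c ι) (B : H) :
    ∑ m ∈ r.index, 𝒮 (r.left m) * (r.right m * B) = ε c • B := by
  have h : ∑ m ∈ r.index, 𝒮 (r.left m) * (r.right m * B)
      = (∑ m ∈ r.index, 𝒮 (r.left m) * r.right m) * B := by
    rw [Finset.sum_mul]
    exact Finset.sum_congr rfl fun m _ => (mul_assoc _ _ _).symm
  rw [h, sum_antipode_mul_eq_smul r, smul_mul_assoc, one_mul]

lemma helper3 {c : H} {ι : Type*} (r : Repr k c ι) (A : H) :
    ∑ p ∈ r.index, A * (r.left p * 𝒮 (r.right p)) = ε c • A := by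
  rw [← Finset.mul_sum, sum_mul_antipode_eq_smul r, mul_smul_comm, mul_one]

lemma helper3' {c d : H} {ι κ : Type*} (rc : Repr k c ι) (rd : Repr k d κ) (A : H) :
    ∑ m ∈ rc.index, ∑ n ∈ rd.index,
        A * ((rc.left m * rd.left n) * 𝒮 (rc.right m * rd.right n)) = ε (c * d) • A := by
  rw [← Finset.sum_product']
  exact helper3 (mulRepr rc rd) A

def Laux (p q r : H) : H ⊗[k] (H ⊗[k] H) →ₗ[k] H :=
  LinearMap.mul' k H ∘ₗ
    TensorProduct.map (LinearMap.mulLeft k (𝒮 p) ∘ₗ (HopfAlgebra.antipode (R := k)))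
      (LinearMap.mul' k H ∘ₗ
        TensorProduct.map (LinearMap.mulRight k q)
          ((HopfAlgebra.antipode (R := k)) ∘ₗ LinearMap.mulRight k r))

@[simp] lemma Laux_tmul (p q r x y z : H) :
    Laux (k := k) p q r (x ⊗ₜ (y ⊗ₜ z)) = (𝒮 p * 𝒮 x) * ((y * q) * 𝒮 (z * r)) := by
  simp [Laux]

def Laux' (x y z : H) : H ⊗[k] (H ⊗[k] H) →ₗ[k] H :=
  LinearMap.mul' k H ∘ₗ
    TensorProduct.map (LinearMap.mulRight k (𝒮 x) ∘ₗ (HopfAlgebra.antipode (R := k)))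
      (LinearMap.mul' k H ∘ₗ
        TensorProduct.map (LinearMap.mulLeft k y)
          ((HopfAlgebra.antipode (R := k)) ∘ₗ LinearMap.mulLeft k z))

@[simp] lemma Laux'_tmul (x y z p q r : H) :
    Laux' (k := k) x y z (p ⊗ₜ (q ⊗ₜ r)) = (𝒮 p * 𝒮 x) * ((y * q) * 𝒮 (z * r)) := by
  simp [Laux']

lemma transport {a : H} {ι : Type*} {κ Λ : ι → Type*} (r : Repr k a ι)
    (r1 : ∀ i : ι, Repr k (r.left i) (κ i))
    (r2 : ∀ i : ι, Repr k (r.right i) (Λ i)) {M : Type*} [AddCommGroup M] [Module k M]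
    (L : H ⊗[k] (H ⊗[k] H) →ₗ[k] M) :
    (∑ i ∈ r.index, ∑ m ∈ (r1 i).index,
        L ((r1 i).left m ⊗ₜ ((r1 i).right m ⊗ₜ r.right i)))
      = ∑ i ∈ r.index, ∑ m ∈ (r2 i).index,
        L (r.left i ⊗ₜ ((r2 i).left m ⊗ₜ (r2 i).right m)) := by
  have h := Coalgebra.sum_tmul_tmul_eq (R := k) r r1 r2
  apply_fun L at h
  simpa [map_sum] using h



-- reorder helpers
lemma reorderA {M : Type*} [AddCommMonoid M] {ι₁ ι₂ : Type*} {κ₁ : ι₁ → Type*}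
    {κ₂ : ι₂ → Type*} (s : Finset ι₁) (t : ∀ j, Finset (κ₁ j)) (u : Finset ι₂)
    (v : ∀ i, Finset (κ₂ i)) (f : (j : ι₁) → κ₁ j → (i : ι₂) → κ₂ i → M) :
    (∑ j ∈ s, ∑ n ∈ t j, ∑ i ∈ u, ∑ m ∈ v i, f j n i m)
      = ∑ j ∈ s, ∑ i ∈ u, ∑ m ∈ v i, ∑ n ∈ t j, f j n i m := by
  refine Finset.sum_congr rfl fun j _ => ?_
  rw [Finset.sum_comm]
  exact Finset.sum_congr rfl fun i _ => Finset.sum_comm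

lemma reorderB {M : Type*} [AddCommMonoid M] {ι₁ ι₂ : Type*} {κ₁ : ι₁ → Type*}
    {κ₂ : ι₂ → Type*} (s : Finset ι₁) (t : ∀ j, Finset (κ₁ j)) (u : Finset ι₂)
    (v : ∀ i, Finset (κ₂ i)) (f : (j : ι₁) → κ₁ j → (i : ι₂) → κ₂ i → M) :
    (∑ j ∈ s, ∑ n ∈ t j, ∑ i ∈ u, ∑ m ∈ v i, f j n i m)
      = ∑ i ∈ u, ∑ m ∈ v i, ∑ j ∈ s, ∑ n ∈ t j, f j n i m := by
  calc (∑ j ∈ s, ∑ n ∈ t j, ∑ i ∈ u, ∑ m ∈ v i, f j n i m)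
      = ∑ j ∈ s, ∑ i ∈ u, ∑ n ∈ t j, ∑ m ∈ v i, f j n i m :=
        Finset.sum_congr rfl fun j _ => Finset.sum_comm
    _ = ∑ i ∈ u, ∑ j ∈ s, ∑ n ∈ t j, ∑ m ∈ v i, f j n i m := Finset.sum_comm
    _ = ∑ i ∈ u, ∑ j ∈ s, ∑ m ∈ v i, ∑ n ∈ t j, f j n i m :=
        Finset.sum_congr rfl fun i _ => Finset.sum_congr rfl fun j _ => Finset.sum_comm
    _ = ∑ i ∈ u, ∑ m ∈ v i, ∑ j ∈ s, ∑ n ∈ t j, f j n i m :=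
        Finset.sum_congr rfl fun i _ => Finset.sum_comm

lemma reorderC {M : Type*} [AddCommMonoid M] {ι₁ ι₂ : Type*} {κ₁ : ι₁ → Type*}
    {κ₂ : ι₂ → Type*} (s : Finset ι₁) (t : ∀ j, Finset (κ₁ j)) (u : Finset ι₂)
    (v : ∀ i, Finset (κ₂ i)) (f : (i : ι₂) → κ₂ i → (j : ι₁) → κ₁ j → M) :
    (∑ i ∈ u, ∑ m ∈ v i, ∑ j ∈ s, ∑ n ∈ t j, f i m j n)
      = ∑ i ∈ u, ∑ j ∈ s, ∑ n ∈ t j, ∑ m ∈ v i, f i m j n := by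
  refine Finset.sum_congr rfl fun i _ => ?_
  rw [Finset.sum_comm]
  exact Finset.sum_congr rfl fun j _ => Finset.sum_comm

lemma antipode_mul' (a b : H) : 𝒮 (a * b) = 𝒮 b * 𝒮 a := by
  classical
  set ra : Repr k a (H × H) := ℛ k a with hra_def
  set rb : Repr k b (H × H) := ℛ k b with hrb_def
  set ra1 : ∀ i : H × H, Repr k (ra.left i) (H × H) := fun i => ℛ k (ra.left i) with hra1_def
  set ra2 : ∀ i : H × H, Repr k (ra.right i) (H × H) := fun i => ℛ k (ra.right i) with hra2_def
  set rb1 : ∀ j : H × H, Repr k (rb.left j) (H × H) := fun j => ℛ k (rb.left j) with hrb1_def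
  set rb2 : ∀ j : H × H, Repr k (rb.right j) (H × H) := fun j => ℛ k (rb.right j) with hrb2_def
  have hE1 :
      (∑ j ∈ rb.index, ∑ n ∈ (rb2 j).index, ∑ i ∈ ra.index, ∑ m ∈ (ra2 i).index,
        Laux (k := k) (rb.left j) ((rb2 j).left n) ((rb2 j).right n)
          (ra.left i ⊗ₜ[k] ((ra2 i).left m ⊗ₜ[k] (ra2 i).right m)))
      = 𝒮 b * 𝒮 a := by
    calc (∑ j ∈ rb.index, ∑ n ∈ (rb2 j).index, ∑ i ∈ ra.index, ∑ m ∈ (ra2 i).index,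
        Laux (k := k) (rb.left j) ((rb2 j).left n) ((rb2 j).right n)
          (ra.left i ⊗ₜ[k] ((ra2 i).left m ⊗ₜ[k] (ra2 i).right m)))
        = ∑ j ∈ rb.index, ∑ i ∈ ra.index, ∑ m ∈ (ra2 i).index, ∑ n ∈ (rb2 j).index,
            Laux (k := k) (rb.left j) ((rb2 j).left n) ((rb2 j).right n)
              (ra.left i ⊗ₜ[k] ((ra2 i).left m ⊗ₜ[k] (ra2 i).right m)) :=
          reorderA _ _ _ _ _
      _ = ∑ j ∈ rb.index, ∑ i ∈ ra.index, ∑ m ∈ (ra2 i).index, ∑ n ∈ (rb2 j).index,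
            (𝒮 (rb.left j) * 𝒮 (ra.left i)) *
              (((ra2 i).left m * (rb2 j).left n) * 𝒮 ((ra2 i).right m * (rb2 j).right n)) := by
          simp only [Laux_tmul]
      _ = ∑ j ∈ rb.index, ∑ i ∈ ra.index,
            ε (ra.right i * rb.right j) • (𝒮 (rb.left j) * 𝒮 (ra.left i)) := by
          refine Finset.sum_congr rfl fun j _ => Finset.sum_congr rfl fun i _ => ?_
          exact helper3' (ra2 i) (rb2 j) _
      _ = 𝒮 b * 𝒮 a := by
          conv_rhs => rw [← repr_counit_smul_right (k := k) rb,
            ← repr_counit_smul_right (k := k) ra, map_sum, map_sum, Finset.sum_mul_sum]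
          refine Finset.sum_congr rfl fun j _ => Finset.sum_congr rfl fun i _ => ?_
          rw [map_smul, map_smul, smul_mul_smul_comm, Bialgebra.counit_mul,
            mul_comm (ε (ra.right i)) (ε (rb.right j))]
  have hE2 :
      (∑ j ∈ rb.index, ∑ n ∈ (rb2 j).index, ∑ i ∈ ra.index, ∑ m ∈ (ra2 i).index,
        Laux (k := k) (rb.left j) ((rb2 j).left n) ((rb2 j).right n)
          (ra.left i ⊗ₜ[k] ((ra2 i).left m ⊗ₜ[k] (ra2 i).right m)))
      = 𝒮 (a * b) := by
    calc (∑ j ∈ rb.index, ∑ n ∈ (rb2 j).index, ∑ i ∈ ra.index, ∑ m ∈ (ra2 i).index,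
        Laux (k := k) (rb.left j) ((rb2 j).left n) ((rb2 j).right n)
          (ra.left i ⊗ₜ[k] ((ra2 i).left m ⊗ₜ[k] (ra2 i).right m)))
        = ∑ j ∈ rb.index, ∑ n ∈ (rb2 j).index, ∑ i ∈ ra.index, ∑ m ∈ (ra1 i).index,
            Laux (k := k) (rb.left j) ((rb2 j).left n) ((rb2 j).right n)
              ((ra1 i).left m ⊗ₜ[k] ((ra1 i).right m ⊗ₜ[k] ra.right i)) := by
          refine Finset.sum_congr rfl fun j _ => Finset.sum_congr rfl fun n _ => ?_
          exact (transport ra ra1 ra2 _).symm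
      _ = ∑ i ∈ ra.index, ∑ m ∈ (ra1 i).index, ∑ j ∈ rb.index, ∑ n ∈ (rb2 j).index,
            Laux (k := k) (rb.left j) ((rb2 j).left n) ((rb2 j).right n)
              ((ra1 i).left m ⊗ₜ[k] ((ra1 i).right m ⊗ₜ[k] ra.right i)) :=
          reorderB _ _ _ _ _
      _ = ∑ i ∈ ra.index, ∑ m ∈ (ra1 i).index, ∑ j ∈ rb.index, ∑ n ∈ (rb2 j).index,
            Laux' (k := k) ((ra1 i).left m) ((ra1 i).right m) (ra.right i)
              (rb.left j ⊗ₜ[k] ((rb2 j).left n ⊗ₜ[k] (rb2 j).right n)) := by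
          simp only [Laux_tmul, Laux'_tmul]
      _ = ∑ i ∈ ra.index, ∑ m ∈ (ra1 i).index, ∑ j ∈ rb.index, ∑ n ∈ (rb1 j).index,
            Laux' (k := k) ((ra1 i).left m) ((ra1 i).right m) (ra.right i)
              ((rb1 j).left n ⊗ₜ[k] ((rb1 j).right n ⊗ₜ[k] rb.right j)) := by
          refine Finset.sum_congr rfl fun i _ => Finset.sum_congr rfl fun m _ => ?_
          exact (transport rb rb1 rb2 _).symm
      _ = ∑ i ∈ ra.index, ∑ j ∈ rb.index, ∑ n ∈ (rb1 j).index, ∑ m ∈ (ra1 i).index,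
            Laux' (k := k) ((ra1 i).left m) ((ra1 i).right m) (ra.right i)
              ((rb1 j).left n ⊗ₜ[k] ((rb1 j).right n ⊗ₜ[k] rb.right j)) :=
          reorderC _ _ _ _ _
      _ = ∑ i ∈ ra.index, ∑ j ∈ rb.index, ∑ n ∈ (rb1 j).index, ∑ m ∈ (ra1 i).index,
            𝒮 ((rb1 j).left n) * (𝒮 ((ra1 i).left m) * ((ra1 i).right m *
              ((rb1 j).right n * 𝒮 (ra.right i * rb.right j)))) := by
          simp only [Laux'_tmul, mul_assoc]
      _ = ∑ i ∈ ra.index, ∑ j ∈ rb.index, ∑ n ∈ (rb1 j).index,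
            ε (ra.left i) • (𝒮 ((rb1 j).left n) *
              ((rb1 j).right n * 𝒮 (ra.right i * rb.right j))) := by
          refine Finset.sum_congr rfl fun i _ => Finset.sum_congr rfl fun j _ =>
            Finset.sum_congr rfl fun n _ => ?_
          exact helper1 (ra1 i) _ _
      _ = ∑ i ∈ ra.index, ∑ j ∈ rb.index,
            ε (ra.left i) • (ε (rb.left j) • 𝒮 (ra.right i * rb.right j)) := by
          refine Finset.sum_congr rfl fun i _ => Finset.sum_congr rfl fun j _ => ?_
          rw [← Finset.smul_sum, helper5 (rb1 j) _]
      _ = 𝒮 (a * b) := by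
          conv_rhs => rw [← repr_counit_smul_left (k := k) ra,
            ← repr_counit_smul_left (k := k) rb, Finset.sum_mul_sum, map_sum]
          refine Finset.sum_congr rfl fun i _ => ?_
          rw [map_sum]
          refine Finset.sum_congr rfl fun j _ => ?_
          rw [smul_mul_assoc, mul_smul_comm, map_smul, map_smul]
  rw [← hE2, hE1]
/-! ### Sandwich maps -/

def swB : H ⊗[k] H →ₗ[k] H →ₗ[k] H :=
  TensorProduct.lift (LinearMap.mk₂ k
    (fun a b => LinearMap.mulRight k b ∘ₗ LinearMap.mulLeft k (𝒮 a))
    (by intros; ext m; simp [add_mul])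
    (by intros; ext m; simp [smul_mul_assoc])
    (by intros; ext m; simp [mul_add])
    (by intros; ext m; simp))

@[simp] lemma swB_tmul (a b m : H) : swB (a ⊗ₜ[k] b) m = 𝒮 a * m * b := by
  simp [swB]

def twB : H ⊗[k] H →ₗ[k] H →ₗ[k] H :=
  TensorProduct.lift (LinearMap.mk₂ k
    (fun a b => LinearMap.mulRight k (𝒮 b) ∘ₗ LinearMap.mulLeft k a)
    (by intros; ext m; simp [add_mul])
    (by intros; ext m; simp [smul_mul_assoc])
    (by intros; ext m; simp [mul_add])
    (by intros; ext m; simp))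

@[simp] lemma twB_tmul (a b m : H) : twB (a ⊗ₜ[k] b) m = a * m * 𝒮 b := by
  simp [twB]

lemma swB_mul (X Y : H ⊗[k] H) (m : H) : swB (X * Y) m = swB Y (swB X m) := by
  induction X using TensorProduct.induction_on with
  | zero => simp
  | tmul a b =>
    induction Y using TensorProduct.induction_on with
    | zero => simp
    | tmul c d => simp [Algebra.TensorProduct.tmul_mul_tmul, antipode_mul', mul_assoc]
    | add y₁ y₂ h₁ h₂ => simp only [mul_add, map_add, LinearMap.add_apply, h₁, h₂]
  | add x₁ x₂ h₁ h₂ => simp only [add_mul, map_add, LinearMap.add_apply, h₁, h₂, mul_add]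

lemma twB_mul (X Y : H ⊗[k] H) (m : H) : twB (X * Y) m = twB X (twB Y m) := by
  induction X using TensorProduct.induction_on with
  | zero => simp
  | tmul a b =>
    induction Y using TensorProduct.induction_on with
    | zero => simp
    | tmul c d => simp [Algebra.TensorProduct.tmul_mul_tmul, antipode_mul', mul_assoc]
    | add y₁ y₂ h₁ h₂ => simp only [mul_add, map_add, LinearMap.add_apply, h₁, h₂]
  | add x₁ x₂ h₁ h₂ => simp only [add_mul, map_add, LinearMap.add_apply, h₁, h₂]

lemma swB_one (m : H) : swB (1 : H ⊗[k] H) m = m := by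
  rw [Algebra.TensorProduct.one_def]; simp [antipode_one']

lemma twB_one (m : H) : twB (1 : H ⊗[k] H) m = m := by
  rw [Algebra.TensorProduct.one_def]; simp [antipode_one']

/-- `Σ S(t¹) t²` as a linear map. -/
def sfL : H ⊗[k] H →ₗ[k] H :=
  LinearMap.mul' k H ∘ₗ (HopfAlgebra.antipode (R := k)).rTensor H

/-- `Σ t¹ S(t²)` as a linear map. -/
def tfL : H ⊗[k] H →ₗ[k] H :=
  LinearMap.mul' k H ∘ₗ (HopfAlgebra.antipode (R := k)).lTensor H

@[simp] lemma sfL_tmul (a b : H) : sfL (a ⊗ₜ[k] b) = 𝒮 a * b := by simp [sfL]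
@[simp] lemma tfL_tmul (a b : H) : tfL (a ⊗ₜ[k] b) = a * 𝒮 b := by simp [tfL]

lemma swB_apply_one (t : H ⊗[k] H) : swB t 1 = sfL t := by
  induction t using TensorProduct.induction_on with
  | zero => simp
  | tmul a b => simp
  | add x y hx hy => simp only [map_add, LinearMap.add_apply, hx, hy]

lemma twB_apply_one (t : H ⊗[k] H) : twB t 1 = tfL t := by
  induction t using TensorProduct.induction_on with
  | zero => simp
  | tmul a b => simp
  | add x y hx hy => simp only [map_add, LinearMap.add_apply, hx, hy]

lemma sfL_comul (x : H) : sfL (Coalgebra.comul (R := k) x) = ε x • 1 := by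
  have h := HopfAlgebra.mul_antipode_rTensor_comul_apply (R := k) (A := H) x
  rw [sfL, LinearMap.comp_apply, h, Algebra.algebraMap_eq_smul_one]

lemma tfL_comul (x : H) : tfL (Coalgebra.comul (R := k) x) = ε x • 1 := by
  have h := HopfAlgebra.mul_antipode_lTensor_comul_apply (R := k) (A := H) x
  rw [tfL, LinearMap.comp_apply, h, Algebra.algebraMap_eq_smul_one]

/-! ### The master sandwich computations -/

lemma AX1 (c d : H) (X Y t : H ⊗[k] H) :
    LinearMap.mul' k H
      ((LinearMap.mulRight k d ∘ₗ LinearMap.mulLeft k c ∘ₗ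
        (HopfAlgebra.antipode (R := k))).rTensor H (X * t * Y))
      = c * swB Y (swB t (swB X d)) := by
  induction X using TensorProduct.induction_on with
  | zero => simp
  | tmul x₁ x₂ =>
    induction t using TensorProduct.induction_on with
    | zero => simp
    | tmul a b =>
      induction Y using TensorProduct.induction_on with
      | zero => simp
      | tmul y₁ y₂ =>
        simp [Algebra.TensorProduct.tmul_mul_tmul, antipode_mul', mul_assoc]
      | add w₁ w₂ h₁ h₂ =>
        simp only [mul_add, map_add, LinearMap.add_apply, h₁, h₂]
    | add t₁ t₂ h₁ h₂ =>
      simp only [mul_add, add_mul, map_add, LinearMap.add_apply, h₁, h₂]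
  | add x₁ x₂ h₁ h₂ =>
    simp only [add_mul, mul_add, map_add, LinearMap.add_apply, h₁, h₂]

lemma AX2 (c d : H) (X Y t : H ⊗[k] H) :
    LinearMap.mul' k H
      ((LinearMap.mulRight k d ∘ₗ LinearMap.mulLeft k c ∘ₗ
        (HopfAlgebra.antipode (R := k))).lTensor H (X * t * Y))
      = twB X (twB t (twB Y c)) * d := by
  induction X using TensorProduct.induction_on with
  | zero => simp
  | tmul x₁ x₂ =>
    induction t using TensorProduct.induction_on with
    | zero => simp
    | tmul a b =>
      induction Y using TensorProduct.induction_on with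
      | zero => simp
      | tmul y₁ y₂ =>
        simp [Algebra.TensorProduct.tmul_mul_tmul, antipode_mul', mul_assoc]
      | add w₁ w₂ h₁ h₂ =>
        simp only [mul_add, map_add, LinearMap.add_apply, h₁, h₂, add_mul]
    | add t₁ t₂ h₁ h₂ =>
      simp only [mul_add, add_mul, map_add, LinearMap.add_apply, h₁, h₂]
  | add x₁ x₂ h₁ h₂ =>
    simp only [add_mul, mul_add, map_add, LinearMap.add_apply, h₁, h₂]
/-! ### Triple-tensor folds -/

def phiF : H ⊗[k] (H ⊗[k] H) →ₗ[k] H := LinearMap.mul' k H ∘ₗ (sfL (k := k) (H := H)).lTensor H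

def chiF : H ⊗[k] (H ⊗[k] H) →ₗ[k] H := sfL ∘ₗ (tfL (k := k) (H := H)).lTensor H

@[simp] lemma phiF_tmul (x : H) (w : H ⊗[k] H) : phiF (x ⊗ₜ[k] w) = x * sfL w := by
  simp [phiF]

@[simp] lemma chiF_tmul (x : H) (w : H ⊗[k] H) : chiF (x ⊗ₜ[k] w) = 𝒮 x * tfL w := by
  simp [chiF]

/-- abbreviations for the legs appearing in the cocycle identity -/
def leg12' (X : H ⊗[k] H) : H ⊗[k] (H ⊗[k] H) :=
  TensorProduct.map LinearMap.id ((TensorProduct.mk k H H).flip 1) X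

def D1 (X : H ⊗[k] H) : H ⊗[k] (H ⊗[k] H) :=
  TensorProduct.assoc k H H H ((Coalgebra.comul (R := k) (A := H)).rTensor H X)

def D2 (X : H ⊗[k] H) : H ⊗[k] (H ⊗[k] H) :=
  (Coalgebra.comul (R := k) (A := H)).lTensor H X

def E1 (X : H ⊗[k] H) : H :=
  TensorProduct.lid k H ((Coalgebra.counit (R := k) (A := H)).rTensor H X)

def E2 (X : H ⊗[k] H) : H :=
  TensorProduct.rid k H ((Coalgebra.counit (R := k) (A := H)).lTensor H X)

lemma L3 (X Y : H ⊗[k] H) :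
    phiF (((1 : H) ⊗ₜ[k] X) * leg12' Y) = tfL Y * sfL X := by
  induction Y using TensorProduct.induction_on with
  | zero => simp [leg12']
  | tmul y₁ y₂ =>
    induction X using TensorProduct.induction_on with
    | zero => simp [leg12']
    | tmul x₁ x₂ =>
      simp [leg12', Algebra.TensorProduct.tmul_mul_tmul, antipode_mul', mul_assoc]
    | add a b ha hb => simp only [add_mul, mul_add, map_add, ha, hb, TensorProduct.tmul_add]
  | add a b ha hb =>
      simp only [leg12'] at ha hb ⊢
      simp only [map_add, mul_add, add_mul, ha, hb]

lemma L4 (X Y : H ⊗[k] H) :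
    chiF (leg12' X * ((1 : H) ⊗ₜ[k] Y)) = sfL X * tfL Y := by
  induction X using TensorProduct.induction_on with
  | zero => simp [leg12']
  | tmul x₁ x₂ =>
    induction Y using TensorProduct.induction_on with
    | zero => simp [leg12']
    | tmul y₁ y₂ =>
      simp [leg12', Algebra.TensorProduct.tmul_mul_tmul, antipode_mul', mul_assoc]
    | add a b ha hb => simp only [add_mul, mul_add, map_add, ha, hb, TensorProduct.tmul_add]
  | add a b ha hb =>
      simp only [leg12'] at ha hb ⊢
      simp only [map_add, mul_add, add_mul, ha, hb]

lemma L5 (a d : H) (s t : H ⊗[k] H) :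
    phiF ((a ⊗ₜ[k] t) * TensorProduct.assoc k H H H (s ⊗ₜ[k] d))
      = a * (tfL s * (sfL t * d)) := by
  induction s using TensorProduct.induction_on with
  | zero => simp
  | tmul s₁ s₂ =>
    induction t using TensorProduct.induction_on with
    | zero => simp
    | tmul t₁ t₂ =>
      simp [Algebra.TensorProduct.tmul_mul_tmul, antipode_mul', mul_assoc]
    | add p q hp hq =>
      simp only [TensorProduct.tmul_add, add_mul, mul_add, map_add, hp, hq]
  | add p q hp hq =>
    simp only [TensorProduct.add_tmul, add_mul, mul_add, map_add, hp, hq]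

lemma L6 (b c : H) (s t : H ⊗[k] H) :
    chiF (TensorProduct.assoc k H H H (s ⊗ₜ[k] b) * (c ⊗ₜ[k] t))
      = 𝒮 c * (sfL s * (tfL t * 𝒮 b)) := by
  induction s using TensorProduct.induction_on with
  | zero => simp
  | tmul s₁ s₂ =>
    induction t using TensorProduct.induction_on with
    | zero => simp
    | tmul t₁ t₂ =>
      simp [Algebra.TensorProduct.tmul_mul_tmul, antipode_mul', mul_assoc]
    | add p q hp hq =>
      simp only [TensorProduct.tmul_add, add_mul, mul_add, map_add, hp, hq]
  | add p q hp hq =>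
    simp only [TensorProduct.add_tmul, add_mul, mul_add, map_add, hp, hq]

lemma L7 (X Y : H ⊗[k] H) : phiF (D2 X * D1 Y) = E2 X * E1 Y := by
  induction X using TensorProduct.induction_on with
  | zero => simp [D2, E2]
  | tmul a b =>
    induction Y using TensorProduct.induction_on with
    | zero => simp [D1, D2, E1, E2]
    | tmul c d =>
      rw [D1, D2, E1, E2, LinearMap.lTensor_tmul, LinearMap.rTensor_tmul, L5,
        sfL_comul, tfL_comul, LinearMap.lTensor_tmul, LinearMap.rTensor_tmul,
        TensorProduct.rid_tmul, TensorProduct.lid_tmul]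
      simp only [smul_mul_assoc, mul_smul_comm, smul_smul, one_mul]
      rw [mul_comm (ε c) (ε b)]
    | add p q hp hq =>
        simp only [D1, D2, E1, E2, map_add, mul_add, add_mul] at hp hq ⊢
        rw [hp, hq]
  | add p q hp hq =>
      simp only [D1, D2, E1, E2, map_add, mul_add, add_mul] at hp hq ⊢
      rw [hp, hq]

lemma L8 (X Y : H ⊗[k] H) : chiF (D1 X * D2 Y) = 𝒮 (E2 Y) * 𝒮 (E1 X) := by
  induction X using TensorProduct.induction_on with
  | zero => simp [D1, E1]
  | tmul a b =>
    induction Y using TensorProduct.induction_on with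
    | zero => simp [D1, D2, E1, E2]
    | tmul c d =>
      rw [D1, D2, E1, E2, LinearMap.lTensor_tmul, LinearMap.rTensor_tmul, L6,
        sfL_comul, tfL_comul, LinearMap.lTensor_tmul, LinearMap.rTensor_tmul,
        TensorProduct.rid_tmul, TensorProduct.lid_tmul, map_smul, map_smul]
      simp only [smul_mul_assoc, mul_smul_comm, smul_smul, one_mul]
      rw [mul_comm (ε a) (ε d)]
    | add p q hp hq =>
        simp only [D1, D2, E1, E2, map_add, mul_add, add_mul] at hp hq ⊢
        rw [hp, hq]
  | add p q hp hq =>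
      simp only [D1, D2, E1, E2, map_add, mul_add, add_mul] at hp hq ⊢
      rw [hp, hq]
/-! ### Multiplicativity of the leg maps -/

lemma tpmap_mul {A B C D : Type*} [Ring A] [Ring B] [Ring C] [Ring D]
    [Algebra k A] [Algebra k B] [Algebra k C] [Algebra k D]
    (f : A →ₗ[k] B) (g : C →ₗ[k] D)
    (hf : ∀ x y, f (x * y) = f x * f y) (hg : ∀ x y, g (x * y) = g x * g y)
    (X Y : A ⊗[k] C) :
    TensorProduct.map f g (X * Y) = TensorProduct.map f g X * TensorProduct.map f g Y := by
  induction X using TensorProduct.induction_on with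
  | zero => simp
  | tmul a c =>
    induction Y using TensorProduct.induction_on with
    | zero => simp
    | tmul a' c' => simp [Algebra.TensorProduct.tmul_mul_tmul, hf, hg]
    | add y₁ y₂ h₁ h₂ => simp only [mul_add, map_add, h₁, h₂]
  | add x₁ x₂ h₁ h₂ => simp only [add_mul, map_add, h₁, h₂]

lemma assoc_mul' (P Q : (H ⊗[k] H) ⊗[k] H) :
    TensorProduct.assoc k H H H (P * Q)
      = TensorProduct.assoc k H H H P * TensorProduct.assoc k H H H Q := by
  have h : ∀ z : (H ⊗[k] H) ⊗[k] H,
      TensorProduct.assoc k H H H z = Algebra.TensorProduct.assoc k k k H H H z := fun z => rfl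
  rw [h, h, h]
  exact map_mul (Algebra.TensorProduct.assoc k k k H H H) P Q

lemma D1_mul (X Y : H ⊗[k] H) : D1 (X * Y) = D1 (k := k) X * D1 Y := by
  show TensorProduct.assoc k H H H (TensorProduct.map _ LinearMap.id (X * Y)) = _
  rw [tpmap_mul (Coalgebra.comul (R := k)) LinearMap.id
    (fun x y => Bialgebra.comul_mul x y) (fun _ _ => rfl), assoc_mul']
  rfl

lemma D2_mul (X Y : H ⊗[k] H) : D2 (X * Y) = D2 (k := k) X * D2 Y := by
  exact tpmap_mul LinearMap.id (Coalgebra.comul (R := k))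
    (fun _ _ => rfl) (fun x y => Bialgebra.comul_mul x y) X Y

lemma leg12'_mul (X Y : H ⊗[k] H) : leg12' (X * Y) = leg12' (k := k) X * leg12' Y := by
  refine tpmap_mul LinearMap.id ((TensorProduct.mk k H H).flip 1)
    (fun _ _ => rfl) (fun x y => ?_) X Y
  simp [Algebra.TensorProduct.tmul_mul_tmul]

lemma lid_mul' (P Q : k ⊗[k] H) :
    TensorProduct.lid k H (P * Q) = TensorProduct.lid k H P * TensorProduct.lid k H Q := by
  induction P using TensorProduct.induction_on with
  | zero => simp
  | tmul r a =>
    induction Q using TensorProduct.induction_on with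
    | zero => simp
    | tmul s b => simp [Algebra.TensorProduct.tmul_mul_tmul, smul_mul_smul_comm, smul_smul, mul_comm]
    | add y₁ y₂ h₁ h₂ => simp only [mul_add, map_add, h₁, h₂]
  | add x₁ x₂ h₁ h₂ => simp only [add_mul, map_add, h₁, h₂]

lemma rid_mul' (P Q : H ⊗[k] k) :
    TensorProduct.rid k H (P * Q) = TensorProduct.rid k H P * TensorProduct.rid k H Q := by
  induction P using TensorProduct.induction_on with
  | zero => simp
  | tmul a r =>
    induction Q using TensorProduct.induction_on with
    | zero => simp
    | tmul b s => simp [Algebra.TensorProduct.tmul_mul_tmul, smul_mul_smul_comm, smul_smul, mul_comm]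
    | add y₁ y₂ h₁ h₂ => simp only [mul_add, map_add, h₁, h₂]
  | add x₁ x₂ h₁ h₂ => simp only [add_mul, map_add, h₁, h₂]

lemma E1_mul (X Y : H ⊗[k] H) : E1 (X * Y) = E1 (k := k) X * E1 Y := by
  rw [E1, show (Coalgebra.counit (R := k) (A := H)).rTensor H (X * Y)
        = (Coalgebra.counit (R := k)).rTensor H X * (Coalgebra.counit (R := k)).rTensor H Y
      from tpmap_mul (Coalgebra.counit (R := k)) LinearMap.id
        (fun x y => Bialgebra.counit_mul x y) (fun _ _ => rfl) X Y, lid_mul']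
  rfl

lemma E2_mul (X Y : H ⊗[k] H) : E2 (X * Y) = E2 (k := k) X * E2 Y := by
  rw [E2, show (Coalgebra.counit (R := k) (A := H)).lTensor H (X * Y)
        = (Coalgebra.counit (R := k)).lTensor H X * (Coalgebra.counit (R := k)).lTensor H Y
      from tpmap_mul LinearMap.id (Coalgebra.counit (R := k))
        (fun _ _ => rfl) (fun x y => Bialgebra.counit_mul x y) X Y, rid_mul']
  rfl

lemma D1_one : D1 (1 : H ⊗[k] H) = 1 := by
  rw [D1, Algebra.TensorProduct.one_def, LinearMap.rTensor_tmul, Bialgebra.comul_one,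
    Algebra.TensorProduct.one_def (A := H), TensorProduct.assoc_tmul,
    ← Algebra.TensorProduct.one_def, ← Algebra.TensorProduct.one_def]

lemma D2_one : D2 (1 : H ⊗[k] H) = 1 := by
  rw [D2, Algebra.TensorProduct.one_def, LinearMap.lTensor_tmul, Bialgebra.comul_one,
    ← Algebra.TensorProduct.one_def]

lemma leg12'_one : leg12' (1 : H ⊗[k] H) = 1 := by
  rw [leg12', Algebra.TensorProduct.one_def, TensorProduct.map_tmul]
  simp only [LinearMap.id_coe, id_eq, LinearMap.flip_apply, TensorProduct.mk_apply]
  rw [← Algebra.TensorProduct.one_def, ← Algebra.TensorProduct.one_def]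

lemma E1_one : E1 (1 : H ⊗[k] H) = 1 := by
  rw [E1, Algebra.TensorProduct.one_def, LinearMap.rTensor_tmul, Bialgebra.counit_one,
    TensorProduct.lid_tmul, one_smul]

lemma E2_one : E2 (1 : H ⊗[k] H) = 1 := by
  rw [E2, Algebra.TensorProduct.one_def, LinearMap.lTensor_tmul, Bialgebra.counit_one,
    TensorProduct.rid_tmul, one_smul]

/-! ### The key consequences of the cocycle identity -/

section Twist

variable {F Finv : H ⊗[k] H}
variable (hFF : F * Finv = 1) (hFiF : Finv * F = 1)
variable (hcoc : leg12' F * D1 (k := k) F = ((1 : H) ⊗ₜ[k] F) * D2 F)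

include hFF hFiF hcoc in
lemma I1 : ((1 : H) ⊗ₜ[k] Finv) * leg12' F = D2 F * D1 Finv := by
  have hD1 : D1 (k := k) F * D1 Finv = 1 := by rw [← D1_mul, hFF, D1_one]
  have h2 : leg12' (k := k) F = ((1 : H) ⊗ₜ[k] F) * D2 F * D1 Finv := by
    rw [← hcoc, mul_assoc, hD1, mul_one]
  rw [h2, show ((1:H) ⊗ₜ[k] Finv) * (((1:H) ⊗ₜ[k] F) * D2 F * D1 Finv)
      = (((1:H) ⊗ₜ[k] Finv) * ((1:H) ⊗ₜ[k] F)) * (D2 F * D1 Finv) by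
        simp only [mul_assoc]]
  rw [Algebra.TensorProduct.tmul_mul_tmul, one_mul, hFiF, ← Algebra.TensorProduct.one_def,
    one_mul]

include hFF hFiF hcoc in
lemma I2 : D1 (k := k) F * D2 Finv = leg12' Finv * ((1 : H) ⊗ₜ[k] F) := by
  have hD2 : D2 (k := k) F * D2 Finv = 1 := by rw [← D2_mul, hFF, D2_one]
  have h2 : D1 (k := k) F = leg12' Finv * (((1 : H) ⊗ₜ[k] F) * D2 F) := by
    have := congrArg (fun z => leg12' (k := k) Finv * z) hcoc
    simpa only [← mul_assoc, ← leg12'_mul, hFiF, leg12'_one, one_mul] using this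
  rw [h2, mul_assoc, mul_assoc, hD2, mul_one]

variable (hE1F : E1 (k := k) F = 1) (hE2F : E2 (k := k) F = 1)

include hFF hE1F in
lemma E1_Finv : E1 (k := k) Finv = 1 := by
  have h : E1 (k := k) F * E1 Finv = 1 := by rw [← E1_mul, hFF, E1_one]
  rwa [hE1F, one_mul] at h

include hFiF hE2F in
lemma E2_Finv : E2 (k := k) Finv = 1 := by
  have h : E2 (k := k) Finv * E2 F = 1 := by rw [← E2_mul, hFiF, E2_one]
  rwa [hE2F, mul_one] at h

include hFF hFiF hcoc hE1F hE2F in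
lemma uv_one : tfL (k := k) F * sfL Finv = 1 := by
  calc tfL (k := k) F * sfL Finv = phiF (((1 : H) ⊗ₜ[k] Finv) * leg12' F) := (L3 Finv F).symm
    _ = phiF (D2 F * D1 Finv) := by rw [I1 hFF hFiF hcoc]
    _ = E2 F * E1 Finv := L7 F Finv
    _ = 1 := by rw [hE2F, E1_Finv hFF hE1F, one_mul]

include hFF hFiF hcoc hE1F hE2F in
lemma vu_one : sfL (k := k) Finv * tfL F = 1 := by
  calc sfL (k := k) Finv * tfL F = chiF (leg12' Finv * ((1 : H) ⊗ₜ[k] F)) := (L4 Finv F).symm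
    _ = chiF (D1 F * D2 Finv) := by rw [I2 hFF hFiF hcoc]
    _ = 𝒮 (E2 Finv) * 𝒮 (E1 F) := L8 F Finv
    _ = 1 := by rw [hE1F, E2_Finv hFiF hE2F, antipode_one', one_mul]

end Twist
end TwistAux

/-- The twisted antipode `S_F(x) := u·S(x)·u⁻¹` satisfies the antipode axioms
for the twisted bialgebra `(H, ·, Δ_F, ε)`: `Σ S_F(x_{F(1)})·x_{F(2)} = ε(x)·1` and
`Σ x_{F(1)}·S_F(x_{F(2)}) = ε(x)·1` for all `x ∈ H`. -/
theorem antipodeF_axioms {k H : Type*} [CommRing k] [Ring H] [HopfAlgebra k H]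
    (F Finv : H ⊗[k] H) (hF : IsDrinfeldTwist F Finv) :
    (∀ x : H, LinearMap.mul' k H ((antipodeF F Finv).rTensor H (comulF F Finv x))
        = Coalgebra.counit (R := k) x • (1 : H)) ∧
    ∀ x : H, LinearMap.mul' k H ((antipodeF F Finv).lTensor H (comulF F Finv x))
        = Coalgebra.counit (R := k) x • (1 : H) := by
  obtain ⟨hFF, hFiF, hcoc, hE1F, hE2F⟩ := hF
  have hcoc' : leg12' F * D1 (k := k) F = ((1 : H) ⊗ₜ[k] F) * D2 F := hcoc
  have hE1F' : E1 (k := k) F = 1 := hE1F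
  have hE2F' : E2 (k := k) F = 1 := hE2F
  have huv := uv_one hFF hFiF hcoc' hE1F' hE2F'
  constructor
  · intro x
    have hc : comulF F Finv x = F * Coalgebra.comul (R := k) x * Finv := rfl
    have ha : antipodeF F Finv
        = LinearMap.mulRight k (sfL Finv) ∘ₗ LinearMap.mulLeft k (tfL F) ∘ₗ
          (HopfAlgebra.antipode (R := k)) := rfl
    rw [hc, ha, AX1]
    have hA : swB F (sfL (k := k) Finv) = 1 := by
      rw [← swB_apply_one, ← swB_mul, hFiF, swB_one]
    rw [hA, swB_apply_one, sfL_comul, map_smul, swB_apply_one, mul_smul_comm, huv]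
  · intro x
    have hc : comulF F Finv x = F * Coalgebra.comul (R := k) x * Finv := rfl
    have ha : antipodeF F Finv
        = LinearMap.mulRight k (sfL Finv) ∘ₗ LinearMap.mulLeft k (tfL F) ∘ₗ
          (HopfAlgebra.antipode (R := k)) := rfl
    rw [hc, ha, AX2]
    have hB : twB Finv (tfL (k := k) F) = 1 := by
      rw [← twB_apply_one, ← twB_mul, hFiF, twB_one]
    rw [hB, twB_apply_one, tfL_comul, map_smul, twB_apply_one, smul_mul_assoc, huv]
end

section
/- For any H-equivariant Lie algebra g and any Drinfel'd twist F on H, the twisted bracket is braided antisymmetric: [a, b]⋆ = −Σ [Rₖ • b, Rᵏ • a]⋆ for all a, b ∈ g, where R⁻¹ = Σ Rₖ ⊗ Rᵏ is the inverse of the R-matrix. -/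
open TensorProduct

noncomputable section Aux

variable {k H A B C g : Type*} [CommRing k] [Ring H] [Algebra k H]
    [AddCommGroup A] [Module k A] [AddCommGroup B] [Module k B]
    [AddCommGroup C] [Module k C]

lemma twistBil_tmul (actA : H →ₗ[k] A →ₗ[k] A) (actB : H →ₗ[k] B →ₗ[k] B)
    (mu : A →ₗ[k] B →ₗ[k] C) (x y : H) (a : A) (b : B) :
    twistBil actA actB mu (x ⊗ₜ[k] y) a b = mu (actA x a) (actB y b) := by
  simp [twistBil]

lemma twistBil_add (actA : H →ₗ[k] A →ₗ[k] A) (actB : H →ₗ[k] B →ₗ[k] B)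
    (mu : A →ₗ[k] B →ₗ[k] C) (S T : H ⊗[k] H) (a : A) (b : B) :
    twistBil actA actB mu (S + T) a b
      = twistBil actA actB mu S a b + twistBil actA actB mu T a b := by
  simp [twistBil, map_add]

variable [LieRing g] [LieAlgebra k g]

lemma twistBil_compose (act : H →ₗ[k] g →ₗ[k] g)
    (hmul : ∀ (x y : H) (a : g), act (x * y) a = act x (act y a))
    (mu : g →ₗ[k] g →ₗ[k] g) (S T : H ⊗[k] H) (a b : g) :
    twistBil act act (twistBil act act mu S) T a b
      = twistBil act act mu (S * T) a b := by
  induction T using TensorProduct.induction_on with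
  | zero => simp [twistBil]
  | tmul x y =>
    induction S using TensorProduct.induction_on with
    | zero => simp [twistBil]
    | tmul u v =>
      rw [Algebra.TensorProduct.tmul_mul_tmul, twistBil_tmul, twistBil_tmul,
        twistBil_tmul, hmul, hmul]
    | add S1 S2 h1 h2 =>
      rw [add_mul, twistBil_add, ← h1, ← h2]
      simp only [twistBil_tmul]
      rw [twistBil_add]
  | add T1 T2 h1 h2 =>
    rw [mul_add, twistBil_add, twistBil_add, h1, h2]

lemma twistBil_lie_antisymm (act : H →ₗ[k] g →ₗ[k] g) (T : H ⊗[k] H) (a b : g) :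
    twistBil act act (lieBil k g) T a b
      = - twistBil act act (lieBil k g) (TensorProduct.comm k H H T) b a := by
  induction T using TensorProduct.induction_on with
  | zero => rw [map_zero]; simp only [map_zero, twistBil, LinearMap.comp_apply]; simp
  | tmul x y =>
    rw [TensorProduct.comm_tmul, twistBil_tmul, twistBil_tmul]
    simp only [lieBil, LinearMap.mk₂_apply]
    exact (lie_skew _ _).symm
  | add T1 T2 h1 h2 =>
    rw [map_add, twistBil_add, twistBil_add, h1, h2, neg_add]

end Aux

/-- For any `H`-equivariant Lie algebra `g` and any Drinfel'd twist `F` on `H`,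
the twisted bracket is braided antisymmetric: `[a, b]⋆ = −Σ [Rₖ • b, Rᵏ • a]⋆` with
`R⁻¹ = Σ Rₖ ⊗ Rᵏ`. -/
theorem lieStar_braided_antisymm {k H g : Type*} [CommRing k] [Ring H] [HopfAlgebra k H]
    [LieRing g] [LieAlgebra k g] (act : H →ₗ[k] g →ₗ[k] g) (hact : IsEquivLieAlgebra act)
    (F Finv : H ⊗[k] H) (hF : IsDrinfeldTwist F Finv) :
    ∀ a b : g, lieStar act Finv a b
      = - twistBil act act (lieStar act Finv) (RmatInv F Finv) b a := by
  intro a b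
  obtain ⟨⟨hmul, -⟩, -⟩ := hact
  have hFinv : Finv * RmatInv F Finv = TensorProduct.comm k H H Finv := by
    rw [RmatInv, ← mul_assoc, hF.2.1, one_mul]
  unfold lieStar
  rw [twistBil_compose act hmul, hFinv, twistBil_lie_antisymm act Finv a b]
end
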